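/- Let N = 4M with M > 1 odd, and let s and t be the numbers of distinct prime factors p of M with p ≡ 1 (mod 4) and p ≡ 3 (mod 4) respectively. If M is not squarefree and M ≠ 9, then ν(4) > 4. If M is squarefree, then ν(4) > 4 if and only if 6s + 4t > 11. -/

import Mathlib

/-- The number `ν(4)` of fixed points of the Atkin–Lehner involution `W₄` on
`X₀(4M)` (`M > 1` odd), by the Fueter–Hijikata formula:
`ν(4) = ∏_{p∣M}(1 + (-1/p)) + ∏_{p^k‖M}(p^⌊k/2⌋ + p^⌊(k-1)/2⌋)`, the Legendre
symbol `(-1/p) = (-4/p)` at the odd prime `p` being expressed via the Jacobi symbol. -/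
def nu4 (M : ℕ) : ℤ :=
  ∏ p ∈ M.primeFactors, (1 + jacobiSym (-4) p) +
  ∏ p ∈ M.primeFactors,
    ((p : ℤ) ^ (M.factorization p / 2) + (p : ℤ) ^ ((M.factorization p - 1) / 2))

lemma jac_neg_four {p : ℕ} (hp : Odd p) : jacobiSym (-4) p = ZMod.χ₄ p := by
  have h2 : Int.gcd 2 p = 1 := by
    have := Nat.coprime_two_left.mpr hp
    simpa [Int.gcd] using this
  have : ((-4 : ℤ)) = -1 * 2 ^ 2 := by norm_num
  rw [this, jacobiSym.mul_left, jacobiSym.sq_one' h2, mul_one, jacobiSym.at_neg_one hp]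

/-- For `N = 4M`, `M > 1` odd: if `M` is not squarefree and
`M ≠ 9` then `ν(4) > 4`; if `M` is squarefree then `ν(4) > 4 ↔ 6s + 4t > 11`,
where `s` and `t` count the prime factors of `M` congruent to `1` resp. `3 (mod 4)`. -/
theorem nu4_gt_four (M : ℕ) (hM : 1 < M) (hodd : Odd M)
    (s t : ℕ)
    (hs : s = (M.primeFactors.filter (fun p => p % 4 = 1)).card)
    (ht : t = (M.primeFactors.filter (fun p => p % 4 = 3)).card) :
    (¬ Squarefree M ∧ M ≠ 9 → 4 < nu4 M) ∧
    (Squarefree M → (4 < nu4 M ↔ 11 < 6 * s + 4 * t)) := by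
  have hM0 : M ≠ 0 := by omega
  set P := M.primeFactors with hP
  set F : ℕ → ℤ := fun p =>
    (p : ℤ) ^ (M.factorization p / 2) + (p : ℤ) ^ ((M.factorization p - 1) / 2) with hF
  -- every prime factor is odd, hence ≡ 1 or 3 mod 4
  have hPodd : ∀ p ∈ P, p % 4 = 1 ∨ p % 4 = 3 := by
    intro p hp
    have hpp := Nat.prime_of_mem_primeFactors hp
    have hpd := Nat.dvd_of_mem_primeFactors hp
    have hp2 : p % 2 = 1 := by
      by_contra hc
      have h2p : 2 ∣ p := by omega
      have : 2 ∣ M := h2p.trans hpd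
      rw [Nat.odd_iff] at hodd; omega
    have := hpp.two_le
    omega
  have hfac : ∀ p ∈ P, (1 + jacobiSym (-4) p) = if p % 4 = 1 then 2 else 0 := by
    intro p hp
    have hpodd : Odd p := by
      have := hPodd p hp; rw [Nat.odd_iff]; omega
    rw [jac_neg_four hpodd]
    rcases hPodd p hp with h | h
    · rw [ZMod.χ₄_nat_one_mod_four h, if_pos h]; ring
    · rw [ZMod.χ₄_nat_three_mod_four h, if_neg (by omega)]; ring
  -- first product
  have hA : ∏ p ∈ P, (1 + jacobiSym (-4) p) = if t = 0 then 2 ^ s else 0 := by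
    by_cases ht0 : t = 0
    · rw [if_pos ht0]
      have hall : ∀ p ∈ P, p % 4 = 1 := by
        intro p hp
        rcases hPodd p hp with h | h
        · exact h
        · exfalso
          have : p ∈ P.filter (fun p => p % 4 = 3) := Finset.mem_filter.mpr ⟨hp, h⟩
          rw [ht] at ht0
          simp [Finset.card_eq_zero] at ht0
          exact ht0 hp h
      have : ∏ p ∈ P, (1 + jacobiSym (-4) p) = ∏ _p ∈ P, (2 : ℤ) := by
        refine Finset.prod_congr rfl fun p hp => ?_
        rw [hfac p hp, if_pos (hall p hp)]
      rw [this, Finset.prod_const]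
      congr 1
      rw [hs]
      congr 1
      exact (Finset.filter_eq_self.mpr hall).symm
    · rw [if_neg ht0]
      have : ∃ p ∈ P, p % 4 = 3 := by
        by_contra hc
        push_neg at hc
        apply ht0
        rw [ht, Finset.card_eq_zero, Finset.filter_eq_empty_iff]
        exact fun p hp => hc p hp
      obtain ⟨p, hp, hp3⟩ := this
      refine Finset.prod_eq_zero hp ?_
      rw [hfac p hp, if_neg (by omega)]
  -- each factor of the second product is at least 2
  have hone : ∀ p ∈ P, ∀ k : ℕ, (1 : ℤ) ≤ (p : ℤ) ^ k := by
    intro p hp k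
    exact one_le_pow₀ (by exact_mod_cast (Nat.prime_of_mem_primeFactors hp).one_lt.le)
  have hF2 : ∀ p ∈ P, (2 : ℤ) ≤ F p := by
    intro p hp
    have h1 := hone p hp (M.factorization p / 2)
    have h2 := hone p hp ((M.factorization p - 1) / 2)
    simp only [hF]; linarith
  have hrest1 : ∀ S : Finset ℕ, S ⊆ P → (1 : ℤ) ≤ ∏ p ∈ S, F p := by
    intro S hS
    calc (1 : ℤ) = ∏ _p ∈ S, (1 : ℤ) := by simp
    _ ≤ ∏ p ∈ S, F p :=
      Finset.prod_le_prod (fun _ _ => zero_le_one) (fun p hp => by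
        linarith [hF2 p (hS hp)])
  constructor
  · -- non-squarefree case
    rintro ⟨hnsf, h9⟩
    have hA0 : (0 : ℤ) ≤ ∏ p ∈ P, (1 + jacobiSym (-4) p) := by
      rw [hA]; split <;> positivity
    obtain ⟨q, hq, hqd⟩ : ∃ q, Nat.Prime q ∧ q * q ∣ M := by
      by_contra hc
      push_neg at hc
      exact hnsf (Nat.squarefree_iff_prime_squarefree.mpr
        (fun x hx => hc x hx))
    have hqP : q ∈ P := Nat.mem_primeFactors.mpr ⟨hq, (dvd_mul_right q q).trans hqd, hM0⟩
    have he2 : 2 ≤ M.factorization q := by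
      rw [← Nat.Prime.pow_dvd_iff_le_factorization hq hM0]
      rwa [sq]
    have hq3 : 3 ≤ q := by
      have := hPodd q hqP; have := hq.two_le; omega
    set e := M.factorization q with hedef
    have hBmain : (5 : ℤ) ≤ ∏ p ∈ P, F p := by
      rw [← Finset.mul_prod_erase P F hqP]
      have hsub : P.erase q ⊆ P := Finset.erase_subset q P
      by_cases hcase : 3 ≤ e ∨ 5 ≤ q
      · -- F q ≥ 6
        have hq6 : (6 : ℤ) ≤ F q := by
          have hd1 : 1 ≤ e / 2 := by omega
          have hp1 : (q : ℤ) ≤ (q : ℤ) ^ (e / 2) := by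
            calc (q : ℤ) = (q : ℤ) ^ 1 := (pow_one _).symm
            _ ≤ (q : ℤ) ^ (e / 2) := pow_le_pow_right₀ (by exact_mod_cast hq3.trans' (by norm_num)) hd1
          rcases hcase with h3 | h5
          · have hd2 : 1 ≤ (e - 1) / 2 := by omega
            have hp2 : (q : ℤ) ≤ (q : ℤ) ^ ((e - 1) / 2) := by
              calc (q : ℤ) = (q : ℤ) ^ 1 := (pow_one _).symm
              _ ≤ (q : ℤ) ^ ((e - 1) / 2) := pow_le_pow_right₀ (by exact_mod_cast hq3.trans' (by norm_num)) hd2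
            have : (3 : ℤ) ≤ (q : ℤ) := by exact_mod_cast hq3
            simp only [hF]; nlinarith
          · have hp2 := hone q hqP ((e - 1) / 2)
            have : (5 : ℤ) ≤ (q : ℤ) := by exact_mod_cast h5
            simp only [hF]; nlinarith
        calc (5 : ℤ) ≤ 6 * 1 := by norm_num
        _ ≤ F q * ∏ p ∈ P.erase q, F p :=
          mul_le_mul hq6 (hrest1 _ hsub) zero_le_one (by linarith)
      · -- q = 3, e = 2
        push_neg at hcase
        have hq3' : q = 3 := by
          have := hPodd q hqP; omega
        have he2' : e = 2 := by omega
        have hf32 : M.factorization 3 = 2 := by rw [← hq3', ← hedef]; exact he2'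
        have hFq : F q = 4 := by
          simp only [hF, hq3', hf32]; norm_num
        -- the erase set is nonempty, else M = 9
        have hne : (P.erase q).Nonempty := by
          rw [Finset.nonempty_iff_ne_empty]
          intro hemp
          have hPq : P = {q} := by
            apply Finset.eq_singleton_iff_unique_mem.mpr
            refine ⟨hqP, fun x hx => ?_⟩
            by_contra hxq
            have : x ∈ P.erase q := Finset.mem_erase.mpr ⟨hxq, hx⟩
            rw [hemp] at this; simp at this
          have hM9 : M = 9 := by
            have hMeq : M.factorization.prod (· ^ ·) = M :=
              Nat.factorization_prod_pow_eq_self hM0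
            rw [Finsupp.prod] at hMeq
            have : (M.factorization).support = P := Nat.support_factorization M
            rw [this, hPq, Finset.prod_singleton, hq3', ← hq3', ← hedef, he2', hq3'] at hMeq
            omega
          exact h9 hM9
        obtain ⟨r, hr⟩ := hne
        have hrP : r ∈ P := Finset.mem_of_mem_erase hr
        have hrec : ∏ p ∈ P.erase q, F p = F r * ∏ p ∈ (P.erase q).erase r, F p :=
          (Finset.mul_prod_erase _ F hr).symm
        have hsub2 : (P.erase q).erase r ⊆ P := (Finset.erase_subset _ _).trans hsub
        have h2r : (2 : ℤ) ≤ F r := hF2 r hrP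
        have : (2 : ℤ) ≤ ∏ p ∈ P.erase q, F p := by
          rw [hrec]
          calc (2 : ℤ) = 2 * 1 := by norm_num
          _ ≤ F r * ∏ p ∈ (P.erase q).erase r, F p :=
            mul_le_mul h2r (hrest1 _ hsub2) zero_le_one (by linarith)
        calc (5 : ℤ) ≤ 4 * 2 := by norm_num
        _ ≤ F q * ∏ p ∈ P.erase q, F p := by
          rw [hFq]
          exact mul_le_mul_of_nonneg_left this (by norm_num)
    have hgoal : nu4 M = ∏ p ∈ P, (1 + jacobiSym (-4) p) + ∏ p ∈ P, F p := rfl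
    rw [hgoal]
    linarith
  · -- squarefree case
    intro hsf
    have hfac1 : ∀ p ∈ P, M.factorization p = 1 := by
      intro p hp
      have hle := (Nat.squarefree_iff_factorization_le_one hM0).mp hsf p
      have hge : 1 ≤ M.factorization p := by
        have hp' : p ∈ (M.factorization).support := hp
        have := Finsupp.mem_support_iff.mp hp'
        omega
      omega
    have hB : ∏ p ∈ P, F p = 2 ^ (s + t) := by
      have : ∏ p ∈ P, F p = ∏ _p ∈ P, (2 : ℤ) := by
        refine Finset.prod_congr rfl fun p hp => ?_
        simp [hF, hfac1 p hp]
      rw [this, Finset.prod_const]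
      congr 1
      have hfilt : P.filter (fun p => ¬ p % 4 = 1) = P.filter (fun p => p % 4 = 3) := by
        apply Finset.filter_congr
        intro p hp
        have := hPodd p hp
        constructor <;> intro h <;> omega
      have h0 := Finset.card_filter_add_card_filter_not (s := P)
        (p := fun p => p % 4 = 1)
      have h1 : (P.filter (fun p => p % 4 = 1)).card
          + (P.filter (fun p => ¬ p % 4 = 1)).card = P.card := h0
      rw [hfilt] at h1
      rw [hs, ht]
      omega
    have hnu : nu4 M = (if t = 0 then (2:ℤ) ^ s else 0) + 2 ^ (s + t) := by
      rw [← hA, ← hB]; rfl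
    rw [hnu]
    by_cases ht0 : t = 0
    · rw [if_pos ht0, ht0]
      rcases le_or_gt s 1 with h | h
      · have : (2 : ℤ) ^ s ≤ 2 ^ 1 := pow_le_pow_right₀ (by norm_num) h
        constructor <;> intro hh
        · simp at hh; linarith
        · omega
      · have : (2 : ℤ) ^ 2 ≤ 2 ^ s := pow_le_pow_right₀ (by norm_num) h
        constructor <;> intro hh
        · omega
        · simp; linarith
    · rw [if_neg ht0]
      have ht1 : 1 ≤ t := by omega
      rcases le_or_gt (s + t) 2 with h | h
      · have : (2 : ℤ) ^ (s + t) ≤ 2 ^ 2 := pow_le_pow_right₀ (by norm_num) h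
        constructor <;> intro hh
        · linarith
        · omega
      · have : (2 : ℤ) ^ 3 ≤ 2 ^ (s + t) := pow_le_pow_right₀ (by norm_num) h
        constructor <;> intro hh
        · omega
        · linarith
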